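/- Let ψ be a unit vector in ℂ² ⊗ ℂ^{d} (a qubit and a qudit), ρ = |ψ⟩⟨ψ|, and ρ_A the partial trace of ρ over the second factor. Then the entanglement of formation of the pure state equals 𝓔 applied to its I-tangle: S(ρ_A) = H(1/2 + (1/2)√(1 − ⟨ψ| ρ̃ |ψ⟩)), where S is the von Neumann entropy and H the binary entropy. -/

import Mathlib

open Matrix Kronecker
open scoped ComplexOrder

noncomputable section

/-- Partial trace over the second factor. -/
def ptraceA {dA dB : ℕ} (ρ : Matrix (Fin dA × Fin dB) (Fin dA × Fin dB) ℂ) :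
    Matrix (Fin dA) (Fin dA) ℂ :=
  Matrix.of fun i i' => ∑ j, ρ (i, j) (i', j)

/-- Partial trace over the first factor. -/
def ptraceB {dA dB : ℕ} (ρ : Matrix (Fin dA × Fin dB) (Fin dA × Fin dB) ℂ) :
    Matrix (Fin dB) (Fin dB) ℂ :=
  Matrix.of fun j j' => ∑ i, ρ (i, j) (i, j')

/-- The universal state inverter ρ ↦ ρ̃. -/
def inverter {dA dB : ℕ} (ρ : Matrix (Fin dA × Fin dB) (Fin dA × Fin dB) ℂ) :
    Matrix (Fin dA × Fin dB) (Fin dA × Fin dB) ℂ :=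
  (Matrix.trace ρᴴ) • (1 : Matrix (Fin dA × Fin dB) (Fin dA × Fin dB) ℂ)
    - (ptraceA ρ)ᴴ ⊗ₖ (1 : Matrix (Fin dB) (Fin dB) ℂ)
    - (1 : Matrix (Fin dA) (Fin dA) ℂ) ⊗ₖ (ptraceB ρ)ᴴ
    + ρᴴ

/-- The rank-one projector |ψ⟩⟨ψ|. -/
def outer {dA dB : ℕ} (ψ : Fin dA × Fin dB → ℂ) :
    Matrix (Fin dA × Fin dB) (Fin dA × Fin dB) ℂ :=
  Matrix.vecMulVec ψ (star ψ)

/-- A density matrix: positive semidefinite with trace one. -/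
def IsDensityMatrix {m : Type*} [Fintype m] [DecidableEq m] (ρ : Matrix m m ℂ) : Prop :=
  ρ.PosSemidef ∧ ρ.trace = 1

/-- The pure-state tangle ⟨ψ| ρ̃_ψ |ψ⟩ with ρ_ψ = |ψ⟩⟨ψ|. -/
def pureTangle {dA dB : ℕ} (ψ : Fin dA × Fin dB → ℂ) : ℝ :=
  (star ψ ⬝ᵥ (inverter (outer ψ) *ᵥ ψ)).re

/-- The I-tangle: the infimum of Σᵢ pᵢ ⟨ψᵢ| ρ̃ᵢ |ψᵢ⟩ over pure-state decompositions of ρ. -/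
def Itangle {dA dB : ℕ} (ρ : Matrix (Fin dA × Fin dB) (Fin dA × Fin dB) ℂ) : ℝ :=
  sInf { t | ∃ (n : ℕ) (p : Fin n → ℝ) (ψ : Fin n → (Fin dA × Fin dB → ℂ)),
    (∀ i, 0 < p i) ∧ (∑ i, p i = 1) ∧ (∀ i, star (ψ i) ⬝ᵥ ψ i = 1) ∧
    ρ = ∑ i, (p i : ℂ) • outer (ψ i) ∧
    t = ∑ i, p i * pureTangle (ψ i) }


/-- Binary entropy H(y) = −y log₂ y − (1−y) log₂ (1−y) (with 0 log₂ 0 = 0, which is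
automatic since `Real.logb 2 0 = 0`). -/
def binEnt (y : ℝ) : ℝ := -(y * Real.logb 2 y) - (1 - y) * Real.logb 2 (1 - y)

/-- Von Neumann entropy S(σ) = −Σ_k λ_k log₂ λ_k of a Hermitian matrix (junk value 0
on non-Hermitian matrices). -/
def vnEntropy {n : ℕ} (σ : Matrix (Fin n) (Fin n) ℂ) : ℝ :=
  if h : σ.IsHermitian then ∑ k, -(h.eigenvalues k * Real.logb 2 (h.eigenvalues k)) else 0


namespace PureAux

lemma sum_rot {M : Type*} [AddCommMonoid M] {α β γ : Type*} [Fintype α] [Fintype β] [Fintype γ]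
    (f : α → β → γ → M) :
    ∑ a, ∑ b, ∑ c, f a b c = ∑ c, ∑ a, ∑ b, f a b c := by
  calc ∑ a, ∑ b, ∑ c, f a b c
      = ∑ a, ∑ c, ∑ b, f a b c := Finset.sum_congr rfl fun a _ => Finset.sum_comm
    _ = ∑ c, ∑ a, ∑ b, f a b c := Finset.sum_comm

lemma sum4_swap {M : Type*} [AddCommMonoid M] {α β γ δ : Type*}
    [Fintype α] [Fintype β] [Fintype γ] [Fintype δ] (f : α → β → γ → δ → M) :
    ∑ a, ∑ b, ∑ c, ∑ d, f a b c d = ∑ c, ∑ d, ∑ a, ∑ b, f a b c d := by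
  calc ∑ a, ∑ b, ∑ c, ∑ d, f a b c d
      = ∑ a, ∑ c, ∑ d, ∑ b, f a b c d := Finset.sum_congr rfl fun a _ => by
        rw [sum_rot (fun b c d => f a b c d), sum_rot (fun d b c => f a b c d)]
    _ = ∑ c, ∑ d, ∑ a, ∑ b, f a b c d := by
        rw [sum_rot (fun a c d => ∑ b, f a b c d), sum_rot (fun d a c => ∑ b, f a b c d)]

variable {dA dB : ℕ} (ψ : Fin dA × Fin dB → ℂ)

lemma outer_apply (x y) : outer ψ x y = ψ x * star (ψ y) := rfl

lemma outer_conjT : (outer ψ)ᴴ = outer ψ := by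
  ext x y
  simp [outer, Matrix.vecMulVec_apply, Matrix.conjTranspose_apply, mul_comm]

lemma ptA_apply (i i') : ptraceA (outer ψ) i i' = ∑ j, ψ (i, j) * star (ψ (i', j)) := rfl

lemma ptB_apply (j j') : ptraceB (outer ψ) j j' = ∑ i, ψ (i, j) * star (ψ (i, j')) := rfl

lemma ptA_herm : (ptraceA (outer ψ)).IsHermitian := by
  ext i i'
  simp [Matrix.conjTranspose_apply, ptA_apply, mul_comm]

lemma ptB_herm : (ptraceB (outer ψ)).IsHermitian := by
  ext j j'
  simp [Matrix.conjTranspose_apply, ptB_apply, mul_comm]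

lemma trace_outer (hψ : star ψ ⬝ᵥ ψ = 1) : (outer ψ).trace = 1 := by
  have : (outer ψ).trace = ∑ x, star (ψ x) * ψ x := by
    simp [Matrix.trace, Matrix.diag, outer_apply, mul_comm]
  rw [this]; simpa [dotProduct] using hψ

lemma ptA_psd : (ptraceA (outer ψ)).PosSemidef := by
  refine .of_dotProduct_mulVec_nonneg (ptA_herm ψ) fun x => ?_
  have key : star x ⬝ᵥ (ptraceA (outer ψ) *ᵥ x)
      = ∑ j, (∑ i, star (x i) * ψ (i, j)) * star (∑ i, star (x i) * ψ (i, j)) := by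
    simp only [dotProduct, Matrix.mulVec, ptA_apply,
      Finset.mul_sum, Finset.sum_mul, star_sum, star_mul', star_star, Pi.star_apply]
    rw [sum_rot]
    refine Finset.sum_congr rfl fun j _ => ?_
    rw [Finset.sum_comm]
    exact Finset.sum_congr rfl fun a _ => Finset.sum_congr rfl fun b _ => by ring
  rw [key]
  exact Finset.sum_nonneg fun j _ => mul_star_self_nonneg _

lemma sum_eig {n : Type*} [Fintype n] [DecidableEq n] {A : Matrix n n ℂ}
    (hA : A.IsHermitian) : A.trace = ∑ i, (hA.eigenvalues i : ℂ) := by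
  exact hA.trace_eq_sum_eigenvalues

lemma trace_AA : ((ptraceA (outer ψ)) * (ptraceA (outer ψ))).trace
    = ∑ i, ∑ i', ∑ j, ∑ j', (ψ (i,j) * star (ψ (i',j))) * (ψ (i',j') * star (ψ (i,j'))) := by
  simp only [Matrix.trace, Matrix.diag, Matrix.mul_apply, ptA_apply]
  exact Finset.sum_congr rfl fun i _ => Finset.sum_congr rfl fun i' _ =>
    Finset.sum_mul_sum _ _ _ _

lemma trace_BB : ((ptraceB (outer ψ)) * (ptraceB (outer ψ))).trace
    = ∑ j, ∑ j', ∑ i, ∑ i', (ψ (i,j) * star (ψ (i,j'))) * (ψ (i',j') * star (ψ (i',j))) := by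
  simp only [Matrix.trace, Matrix.diag, Matrix.mul_apply, ptB_apply]
  exact Finset.sum_congr rfl fun j _ => Finset.sum_congr rfl fun j' _ =>
    Finset.sum_mul_sum _ _ _ _

lemma dot_kronA : star ψ ⬝ᵥ (((ptraceA (outer ψ)) ⊗ₖ (1 : Matrix (Fin dB) (Fin dB) ℂ)) *ᵥ ψ)
    = ((ptraceA (outer ψ)) * (ptraceA (outer ψ))).trace := by
  simp only [dotProduct, Matrix.mulVec, Fintype.sum_prod_type,
    kroneckerMap_apply, Matrix.one_apply, mul_ite, mul_one, mul_zero, ite_mul, zero_mul,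
    Finset.sum_ite_eq, Finset.mem_univ, if_true, Pi.star_apply]
  simp only [Matrix.trace, Matrix.diag, Matrix.mul_apply, Finset.mul_sum]
  refine Finset.sum_congr rfl fun i _ => ?_
  rw [Finset.sum_comm]
  refine Finset.sum_congr rfl fun i' _ => ?_
  rw [ptA_apply ψ i' i, Finset.mul_sum]
  exact Finset.sum_congr rfl fun j _ => by ring

lemma dot_kronB : star ψ ⬝ᵥ (((1 : Matrix (Fin dA) (Fin dA) ℂ) ⊗ₖ (ptraceB (outer ψ))) *ᵥ ψ)
    = ((ptraceB (outer ψ)) * (ptraceB (outer ψ))).trace := by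
  simp only [dotProduct, Matrix.mulVec, Fintype.sum_prod_type, kroneckerMap_apply,
    Matrix.one_apply, mul_ite, mul_one, mul_zero, ite_mul, zero_mul, one_mul,
    Finset.sum_ite_irrel, Finset.sum_ite_eq, Finset.mem_univ, if_true, Pi.star_apply,
    Finset.mul_sum, Finset.sum_const_zero, Matrix.trace, Matrix.diag, Matrix.mul_apply]
  rw [sum_rot (fun (i : Fin dA) (j j' : Fin dB) =>
    star (ψ (i, j)) * (ptraceB (outer ψ) j j' * ψ (i, j')))]
  refine Finset.sum_congr rfl fun j' _ => ?_
  rw [Finset.sum_comm]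
  refine Finset.sum_congr rfl fun j _ => ?_
  rw [ptB_apply ψ j' j, Finset.sum_mul]
  exact Finset.sum_congr rfl fun i _ => by ring

lemma trace_BB_eq_AA : ((ptraceB (outer ψ)) * (ptraceB (outer ψ))).trace
    = ((ptraceA (outer ψ)) * (ptraceA (outer ψ))).trace := by
  rw [trace_AA, trace_BB, sum4_swap (fun (j j' : Fin dB) (i i' : Fin dA) =>
    (ψ (i,j) * star (ψ (i,j'))) * (ψ (i',j') * star (ψ (i',j))))]
  exact Finset.sum_congr rfl fun i _ => Finset.sum_congr rfl fun i' _ =>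
    Finset.sum_congr rfl fun j _ => Finset.sum_congr rfl fun j' _ => by ring

lemma outer_mulVec : outer ψ *ᵥ ψ = (star ψ ⬝ᵥ ψ) • ψ := by
  ext x
  simp only [Matrix.mulVec, dotProduct, Pi.smul_apply, smul_eq_mul, Finset.sum_mul,
    Pi.star_apply]
  exact Finset.sum_congr rfl fun y _ =>
    by simp [outer, Matrix.vecMulVec_apply, Complex.star_def]; ring

lemma trace_sq_fin2 (A : Matrix (Fin 2) (Fin 2) ℂ) :
    (A * A).trace = A.trace ^ 2 - 2 * A.det := by
  simp [Matrix.trace, Matrix.diag, Matrix.mul_apply, Matrix.det_fin_two, Fin.sum_univ_two]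
  ring

lemma trace_ptA (hψ : star ψ ⬝ᵥ ψ = 1) : (ptraceA (outer ψ)).trace = 1 := by
  have h : (ptraceA (outer ψ)).trace = (outer ψ).trace := by
    simp [Matrix.trace, Matrix.diag, ptA_apply, outer_apply, Fintype.sum_prod_type]
  rw [h, trace_outer ψ hψ]

lemma tangle_val (hψ : star ψ ⬝ᵥ ψ = 1) :
    star ψ ⬝ᵥ (inverter (outer ψ) *ᵥ ψ)
      = 2 - 2 * ((ptraceA (outer ψ)) * (ptraceA (outer ψ))).trace := by
  rw [inverter, outer_conjT,
    show (ptraceA (outer ψ))ᴴ = ptraceA (outer ψ) from ptA_herm ψ,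
    show (ptraceB (outer ψ))ᴴ = ptraceB (outer ψ) from ptB_herm ψ]
  rw [Matrix.add_mulVec, Matrix.sub_mulVec, Matrix.sub_mulVec, Matrix.smul_mulVec,
    Matrix.one_mulVec, dotProduct_add, dotProduct_sub, dotProduct_sub, dotProduct_smul,
    trace_outer ψ hψ, dot_kronA, dot_kronB, trace_BB_eq_AA, outer_mulVec, dotProduct_smul,
    hψ]
  simp
  ring

end PureAux

/-- For a pure state ψ of a qubit and a qudit, the entanglement of formation equals 𝓔 of
its I-tangle: S(ρ_A) = H(1/2 + (1/2)√(1 − ⟨ψ| ρ̃ |ψ⟩)). -/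
theorem pure_eof_eq_E_of_tangle {d : ℕ} (ψ : Fin 2 × Fin d → ℂ)
    (hψ : star ψ ⬝ᵥ ψ = 1) :
    vnEntropy (ptraceA (outer ψ)) =
      binEnt (1 / 2 + (1 / 2) * Real.sqrt (1 - pureTangle ψ)) := by
  classical
  have hA : (ptraceA (outer ψ)).IsHermitian := PureAux.ptA_herm ψ
  set a := hA.eigenvalues 0 with ha0
  set b := hA.eigenvalues 1 with hb0
  have hsum : a + b = 1 := by
    have h := PureAux.sum_eig hA
    rw [PureAux.trace_ptA ψ hψ, Fin.sum_univ_two] at h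
    exact_mod_cast h.symm
  have hdet : (ptraceA (outer ψ)).det = (a : ℂ) * (b : ℂ) := by
    rw [hA.det_eq_prod_eigenvalues, Fin.prod_univ_two, ← ha0, ← hb0]; norm_num [RCLike.ofReal, Complex.ofReal]
  have ha : 0 ≤ a := (PureAux.ptA_psd ψ).eigenvalues_nonneg 0
  have hb : 0 ≤ b := (PureAux.ptA_psd ψ).eigenvalues_nonneg 1
  have htangle : pureTangle ψ = 4 * (a * b) := by
    have h2 : ((ptraceA (outer ψ)) * (ptraceA (outer ψ))).trace
        = 1 - 2 * ((a : ℂ) * b) := by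
      rw [PureAux.trace_sq_fin2, PureAux.trace_ptA ψ hψ, hdet]; ring
    rw [pureTangle, PureAux.tangle_val ψ hψ, h2]
    have h3 : (2 - 2 * (1 - 2 * ((a : ℂ) * b))) = ((4 * (a * b) : ℝ) : ℂ) := by
      push_cast; ring
    rw [h3, Complex.ofReal_re]
  have hvn : vnEntropy (ptraceA (outer ψ))
      = -(a * Real.logb 2 a) + -(b * Real.logb 2 b) := by
    rw [vnEntropy, dif_pos hA, Fin.sum_univ_two]
  have hsq : 1 - pureTangle ψ = (a - b) ^ 2 := by
    rw [htangle]; linear_combination (-(a + b + 1)) * hsum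
  rw [hvn, hsq, Real.sqrt_sq_eq_abs]
  rcases le_total b a with hba | hab
  · rw [abs_of_nonneg (by linarith)]
    have hy : 1 / 2 + 1 / 2 * (a - b) = a := by linarith
    rw [hy]
    simp only [binEnt]
    rw [show (1 : ℝ) - a = b by linarith]
    ring
  · rw [abs_of_nonpos (by linarith), show -(a - b) = b - a by ring]
    have hy : 1 / 2 + 1 / 2 * (b - a) = b := by linarith
    rw [hy]
    simp only [binEnt]
    rw [show (1 : ℝ) - b = a by linarith]
    ring
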